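/- Let Θ₀ ⊆ ℝ^p be a convex set, let L : ℝ^p → ℝ be twice continuously differentiable, and let τ₀ ≥ 1. Suppose L satisfies τ₀-Hessian-stability on Θ₀, i.e. ‖θ₁ − θ₂‖²_{∇²L(θ₂)} ≤ τ₀ ‖θ₁ − θ₂‖²_{∇²L(θ₁)} for all θ₁, θ₂ ∈ Θ₀. Then for all θ₁, θ₂ ∈ Θ₀: L(θ₁) ≤ L(θ₂) + ⟨∇L(θ₂), θ₁ − θ₂⟩ + (τ₀/2)‖θ₁ − θ₂‖²_{∇²L(θ₂)}, and L(θ₁) ≥ L(θ₂) + ⟨∇L(θ₂), θ₁ − θ₂⟩ + (1/(2τ₀))‖θ₁ − θ₂‖²_{∇²L(θ₂)}. -/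

import Mathlib

open scoped RealInnerProductSpace

/-- One-dimensional second-order Taylor-type upper bound from a bound on the second
derivative on the open interval `(0,1)`. -/
lemma taylor_aux (f f' f'' : ℝ → ℝ) (hf : ∀ t, HasDerivAt f (f' t) t)
    (hf' : ∀ t, HasDerivAt f' (f'' t) t)
    (C : ℝ) (hb : ∀ t ∈ Set.Ioo (0:ℝ) 1, f'' t ≤ C) :
    f 1 ≤ f 0 + f' 0 + C / 2 := by
  set ψ : ℝ → ℝ := fun t => f' t - f' 0 - C * t with hψdef
  have hψ : ∀ t, HasDerivAt ψ (f'' t - C) t := by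
    intro t
    exact (((hf' t).sub_const (f' 0)).sub ((hasDerivAt_id t).const_mul C)).congr_deriv (by ring)
  have hψanti : AntitoneOn ψ (Set.Icc 0 1) := by
    apply antitoneOn_of_deriv_nonpos (convex_Icc 0 1)
      (fun t _ => ((hψ t).continuousAt).continuousWithinAt)
      (fun t _ => ((hψ t).differentiableAt).differentiableWithinAt)
    intro t ht
    rw [interior_Icc] at ht
    rw [(hψ t).deriv]
    linarith [hb t ht]
  set φ : ℝ → ℝ := fun t => f t - f' 0 * t - C / 2 * t ^ 2 with hφdef
  have hφ : ∀ t, HasDerivAt φ (ψ t) t := by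
    intro t
    have h1 : HasDerivAt (fun x : ℝ => f' 0 * x) (f' 0) t := by
      simpa using (hasDerivAt_id t).const_mul (f' 0)
    have h2 : HasDerivAt (fun x : ℝ => C / 2 * x ^ 2) (C * t) t := by
      have := (hasDerivAt_pow 2 t).const_mul (C / 2)
      exact this.congr_deriv (by norm_num; ring)
    exact ((hf t).sub h1).sub h2
  have hφanti : AntitoneOn φ (Set.Icc 0 1) := by
    apply antitoneOn_of_deriv_nonpos (convex_Icc 0 1)
      (fun t _ => ((hφ t).continuousAt).continuousWithinAt)
      (fun t _ => ((hφ t).differentiableAt).differentiableWithinAt)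
    intro t ht
    rw [interior_Icc] at ht
    rw [(hφ t).deriv]
    have h0 : ψ t ≤ ψ 0 := hψanti (Set.left_mem_Icc.2 zero_le_one)
      ⟨ht.1.le, ht.2.le⟩ ht.1.le
    have : ψ 0 = 0 := by simp [hψdef]
    linarith
  have h01 : φ 1 ≤ φ 0 := hφanti (Set.left_mem_Icc.2 zero_le_one)
    (Set.right_mem_Icc.2 zero_le_one) zero_le_one
  simp only [hφdef, one_pow, mul_one, mul_zero, zero_pow, sub_zero] at h01
  linarith

/-- under `τ₀`-Hessian stability on a convex set `Θ₀`, one obtains upper and lower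
second-order Taylor-type bounds with factors `τ₀/2` and `1/(2τ₀)` (Lemma `LemA` of the paper). -/
theorem stmt_9 {p : ℕ} (Θ₀ : Set (EuclideanSpace ℝ (Fin p))) (hΘ₀ : Convex ℝ Θ₀)
    (L : EuclideanSpace ℝ (Fin p) → ℝ) (hC2 : ContDiff ℝ 2 L)
    (H : EuclideanSpace ℝ (Fin p) → (EuclideanSpace ℝ (Fin p) →L[ℝ] EuclideanSpace ℝ (Fin p)))
    (hH : ∀ x, HasFDerivAt (gradient L) (H x) x)
    (τ₀ : ℝ) (hτ₀ : 1 ≤ τ₀)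
    (hstab : ∀ θ₁ ∈ Θ₀, ∀ θ₂ ∈ Θ₀,
      ⟪θ₁ - θ₂, H θ₂ (θ₁ - θ₂)⟫ ≤ τ₀ * ⟪θ₁ - θ₂, H θ₁ (θ₁ - θ₂)⟫) :
    ∀ θ₁ ∈ Θ₀, ∀ θ₂ ∈ Θ₀,
      L θ₁ ≤ L θ₂ + ⟪gradient L θ₂, θ₁ - θ₂⟫ + τ₀ / 2 * ⟪θ₁ - θ₂, H θ₂ (θ₁ - θ₂)⟫ ∧
      L θ₁ ≥ L θ₂ + ⟪gradient L θ₂, θ₁ - θ₂⟫ + 1 / (2 * τ₀) * ⟪θ₁ - θ₂, H θ₂ (θ₁ - θ₂)⟫ := by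
  intro θ₁ h₁ θ₂ h₂
  set v : EuclideanSpace ℝ (Fin p) := θ₁ - θ₂ with hv
  set c : ℝ → EuclideanSpace ℝ (Fin p) := fun t => θ₂ + t • v with hcdef
  have hτpos : (0:ℝ) < τ₀ := lt_of_lt_of_le one_pos hτ₀
  have hc : ∀ t, HasDerivAt c v t := by
    intro t
    exact (((hasDerivAt_id t).smul_const v).const_add θ₂).congr_deriv (by simp)
  have hc0 : c 0 = θ₂ := by simp [hcdef]
  have hc1 : c 1 = θ₁ := by simp [hcdef, hv]
  have hmem : ∀ t ∈ Set.Ioo (0:ℝ) 1, c t ∈ Θ₀ := by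
    intro t ht
    exact hΘ₀.add_smul_sub_mem h₂ h₁ ⟨ht.1.le, ht.2.le⟩
  have hdiff : Differentiable ℝ L := hC2.differentiable (by norm_num)
  have hg : ∀ t, HasDerivAt (fun t => L (c t)) ⟪gradient L (c t), v⟫ t := by
    intro t
    have h1 : HasFDerivAt L (InnerProductSpace.toDual ℝ _ (gradient L (c t))) (c t) :=
      (hdiff (c t)).hasGradientAt.hasFDerivAt
    exact (h1.comp_hasDerivAt t (hc t)).congr_deriv (by simp)
  have hg' : ∀ t, HasDerivAt (fun t => ⟪gradient L (c t), v⟫) ⟪v, H (c t) v⟫ t := by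
    intro t
    have h1 : HasDerivAt (fun t => gradient L (c t)) (H (c t) v) t :=
      (hH (c t)).comp_hasDerivAt t (hc t)
    have h2 := h1.inner ℝ (hasDerivAt_const t v)
    simp only [inner_zero_right, zero_add] at h2
    rwa [real_inner_comm v ((H (c t)) v)] at h2
  have key : ∀ (A : EuclideanSpace ℝ (Fin p) →L[ℝ] EuclideanSpace ℝ (Fin p)) (t : ℝ)
      (w : EuclideanSpace ℝ (Fin p)), ⟪t • w, A (t • w)⟫ = t ^ 2 * ⟪w, A w⟫ := by
    intro A t w
    rw [map_smul, real_inner_smul_left, real_inner_smul_right]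
    ring
  set Q : ℝ := ⟪v, H θ₂ v⟫ with hQ
  constructor
  · have hb : ∀ t ∈ Set.Ioo (0:ℝ) 1, ⟪v, H (c t) v⟫ ≤ τ₀ * Q := by
      intro t ht
      have hs := hstab θ₂ h₂ (c t) (hmem t ht)
      have he : θ₂ - c t = -(t • v) := by simp [hcdef]
      rw [he] at hs
      simp only [map_neg, inner_neg_neg] at hs
      rw [key, key] at hs
      have ht2 : (0:ℝ) < t ^ 2 := pow_pos ht.1 2
      nlinarith
    have := taylor_aux (fun t => L (c t)) (fun t => ⟪gradient L (c t), v⟫)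
      (fun t => ⟪v, H (c t) v⟫) hg hg' (τ₀ * Q) hb
    simp only [hc0, hc1] at this
    linarith
  · have hb : ∀ t ∈ Set.Ioo (0:ℝ) 1, -⟪v, H (c t) v⟫ ≤ -(Q / τ₀) := by
      intro t ht
      have hs := hstab (c t) (hmem t ht) θ₂ h₂
      have he : c t - θ₂ = t • v := by simp [hcdef]
      rw [he, key, key] at hs
      have ht2 : (0:ℝ) < t ^ 2 := pow_pos ht.1 2
      rw [neg_le_neg_iff, div_le_iff₀ hτpos]
      nlinarith
    have := taylor_aux (fun t => -L (c t)) (fun t => -⟪gradient L (c t), v⟫)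
      (fun t => -⟪v, H (c t) v⟫) (fun t => (hg t).neg) (fun t => (hg' t).neg)
      (-(Q / τ₀)) hb
    simp only [hc0, hc1] at this
    have hne : τ₀ ≠ 0 := ne_of_gt hτpos
    rw [ge_iff_le]
    have h2 : 1 / (2 * τ₀) * Q = Q / τ₀ / 2 := by rw [div_div]; ring
    linarith
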